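/- Pliam's inequality with classical side information: for jointly distributed random variables (X,Y) with X on a finite alphabet \mathcal{X} and Y on a countable alphabet, \frac{|\mathcal{X}|+1}{2} - G(X|Y) \leq \frac{|\mathcal{X}|}{2} \|p_{XY} - u_X \otimes p_Y\|_1, where u_X is the uniform distribution on \mathcal{X}. -/

import Mathlib

section PliamAux
open Fintype

lemma fin_sum_succ (m : ℕ) : ∑ k : Fin m, (((k:ℕ):ℝ) + 1) = (m:ℝ)*((m:ℝ)+1)/2 := by
  induction m with
  | zero => simp
  | succ l ih => rw [Fin.sum_univ_castSucc]; simp only [Fin.coe_castSucc]; rw [ih]; push_cast; ring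

lemma pliam_key {X : Type*} [Fintype X] [Nonempty X] (q : X → ℝ) :
    ((card X : ℝ) + 1) / 2 * (∑ x, q x)
      - ((card X : ℝ) / 2) * ∑ x, |q x - (∑ x', q x') / (card X : ℝ)| ≤
    ⨅ σ : Fin (card X) ≃ X, ∑ k : Fin (card X), (((k : ℕ) : ℝ) + 1) * q (σ k) := by
  set n := card X with hn
  have hn0 : 0 < n := card_pos
  have hnR : (0:ℝ) < n := by exact_mod_cast hn0
  set s := ∑ x, q x with hs
  have : Nonempty (Fin n ≃ X) := ⟨(Fintype.equivFin X).symm⟩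
  apply le_ciInf
  intro σ
  have hsum0 : ∑ k : Fin n, (s / n - q (σ k)) = 0 := by
    rw [Finset.sum_sub_distrib, Finset.sum_const, Equiv.sum_comp σ q, ← hs]
    simp only [Finset.card_univ, Fintype.card_fin, nsmul_eq_mul]
    field_simp
    ring
  have habel : ∑ k : Fin n, (((k:ℕ):ℝ) + 1) * (s / n - q (σ k))
      = ∑ k : Fin n, ((((k:ℕ):ℝ) + 1) - ((n:ℝ)+1)/2) * (s / n - q (σ k)) := by
    rw [← sub_eq_zero, ← Finset.sum_sub_distrib]
    have h : ∀ k : Fin n, (((k:ℕ):ℝ) + 1) * (s / n - q (σ k))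
        - ((((k:ℕ):ℝ) + 1) - ((n:ℝ)+1)/2) * (s / n - q (σ k))
        = ((n:ℝ)+1)/2 * (s / n - q (σ k)) := fun k => by ring
    simp_rw [h, ← Finset.mul_sum, hsum0, mul_zero]
  have hbound : ∑ k : Fin n, ((((k:ℕ):ℝ) + 1) - ((n:ℝ)+1)/2) * (s / n - q (σ k))
      ≤ ((n:ℝ)/2) * ∑ k : Fin n, |s / n - q (σ k)| := by
    rw [Finset.mul_sum]
    apply Finset.sum_le_sum
    intro k _
    calc ((((k:ℕ):ℝ) + 1) - ((n:ℝ)+1)/2) * (s / n - q (σ k))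
        ≤ |((((k:ℕ):ℝ) + 1) - ((n:ℝ)+1)/2) * (s / n - q (σ k))| := le_abs_self _
      _ = |(((k:ℕ):ℝ) + 1) - ((n:ℝ)+1)/2| * |s / n - q (σ k)| := abs_mul _ _
      _ ≤ ((n:ℝ)/2) * |s / n - q (σ k)| := by
          apply mul_le_mul_of_nonneg_right _ (abs_nonneg _)
          rw [abs_le]
          have hk : ((k:ℕ):ℝ) + 1 ≤ n := by exact_mod_cast k.isLt
          have hk0 : (0:ℝ) ≤ ((k:ℕ):ℝ) := Nat.cast_nonneg _
          constructor <;> linarith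
  have hsumeq : ∑ k : Fin n, |s / n - q (σ k)| = ∑ x, |q x - s / n| := by
    rw [← Equiv.sum_comp σ (fun x => |q x - s / n|)]
    exact Finset.sum_congr rfl fun k _ => abs_sub_comm _ _
  have hlhs : ((n:ℝ)+1)/2 * s - ∑ k : Fin n, (((k:ℕ):ℝ) + 1) * q (σ k)
      = ∑ k : Fin n, (((k:ℕ):ℝ) + 1) * (s / n - q (σ k)) := by
    simp_rw [mul_sub, Finset.sum_sub_distrib]
    congr 1
    rw [← Finset.sum_mul, fin_sum_succ]
    field_simp
  linarith [hlhs ▸ habel ▸ (hsumeq ▸ hbound)]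

end PliamAux

open Fintype in
/-- Pliam's inequality with classical side information: for a joint distribution
`p` on `X × Y` (`X` finite, `Y` countable),
`(|X|+1)/2 − G(X|Y) ≤ (|X|/2)·‖p_{XY} − u_X ⊗ p_Y‖₁`, where
`G(X|Y) = ∑_y min_σ ∑_k k · p(σ(k), y)`. -/
theorem pliam_inequality_side_information {X Y : Type*} [Fintype X] [Nonempty X]
    [Countable Y]
    (p : X → Y → ℝ) (hp0 : ∀ x y, 0 ≤ p x y)
    (hp1 : HasSum (fun xy : X × Y => p xy.1 xy.2) 1) :
    ((card X : ℝ) + 1) / 2 -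
        (∑' y : Y, ⨅ σ : Fin (card X) ≃ X,
          ∑ k : Fin (card X), (((k : ℕ) : ℝ) + 1) * p (σ k) y) ≤
      ((card X : ℝ) / 2) *
        ∑' xy : X × Y, |p xy.1 xy.2 - (∑ x' : X, p x' xy.2) / (card X : ℝ)| := by
  have hnR : (0:ℝ) < card X := by exact_mod_cast (card_pos : 0 < card X)
  set n : ℕ := card X with hn
  set A : Y → ℝ := fun y => ∑ x, p x y with hA
  set G : Y → ℝ := fun y => ⨅ σ : Fin n ≃ X, ∑ k : Fin n, (((k:ℕ):ℝ)+1) * p (σ k) y with hG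
  have hne : Nonempty (Fin n ≃ X) := ⟨(Fintype.equivFin X).symm⟩
  have hsum : Summable (fun xy : X × Y => p xy.1 xy.2) := hp1.summable
  have hswap : Summable (fun yx : Y × X => p yx.2 yx.1) := by
    have := (Equiv.prodComm Y X).summable_iff.mpr hsum
    exact this
  have hAsum : Summable A := by
    have h := hswap.prod
    simpa only [tsum_fintype] using h
  have hA0 : ∀ y, 0 ≤ A y := fun y => Finset.sum_nonneg fun x _ => hp0 x y
  have hAtsum : ∑' y, A y = 1 := by
    have h1 : ∑' yx : Y × X, p yx.2 yx.1 = 1 := by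
      have := (Equiv.prodComm Y X).tsum_eq (fun xy : X × Y => p xy.1 xy.2)
      simpa [Function.comp, hp1.tsum_eq] using this
    rw [Summable.tsum_prod hswap] at h1
    simpa [tsum_fintype] using h1
  set F : X × Y → ℝ := fun xy => |p xy.1 xy.2 - A xy.2 / n| with hFdef
  have hFswap_sum : Summable (fun yx : Y × X => F (yx.2, yx.1)) := by
    apply (summable_prod_of_nonneg (fun yx => abs_nonneg _)).2
    refine ⟨fun y => Summable.of_finite, ?_⟩
    apply Summable.of_nonneg_of_le (fun y => tsum_nonneg fun x => abs_nonneg _)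
      (fun y => ?_) (hAsum.mul_left 2)
    rw [tsum_fintype]
    calc ∑ x, F (x, y) ≤ ∑ x, (p x y + A y / n) := by
          apply Finset.sum_le_sum; intro x _
          calc F (x, y) = |p x y - A y / n| := rfl
            _ ≤ |p x y| + |A y / n| := abs_sub _ _
            _ = p x y + A y / n := by
                rw [abs_of_nonneg (hp0 x y), abs_of_nonneg (div_nonneg (hA0 y) hnR.le)]
      _ = A y + A y := by
          rw [Finset.sum_add_distrib, Finset.sum_const, Finset.card_univ, ← hn]
          simp only [nsmul_eq_mul]
          field_simp
          simp only [hA]; ring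
      _ = 2 * A y := by ring
  have hFsum : Summable F := by
    refine (Equiv.prodComm Y X).summable_iff.mp ?_
    exact hFswap_sum
  have hFtsum : ∑' xy : X × Y, F xy = ∑' y, ∑ x, F (x, y) := by
    have h1 : ∑' yx : Y × X, F (yx.2, yx.1) = ∑' xy : X × Y, F xy := by
      have := (Equiv.prodComm Y X).tsum_eq F
      exact this
    rw [← h1, Summable.tsum_prod hFswap_sum]
    simp [tsum_fintype]
  set B : Y → ℝ := fun y => ((n:ℝ)/2) * ∑ x, F (x, y) with hB
  have hBsum : Summable B := by
    have h := hFswap_sum.prod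
    simp only [tsum_fintype] at h
    exact (h.mul_left _)
  have hBtsum : ∑' y, B y = ((n:ℝ)/2) * ∑' xy : X × Y, F xy := by
    rw [hFtsum, hB, tsum_mul_left]
  -- guesswork bounds
  have hG0 : ∀ y, 0 ≤ G y := fun y =>
    le_ciInf fun σ => Finset.sum_nonneg fun k _ =>
      mul_nonneg (by positivity) (hp0 _ y)
  have hGle : ∀ y, G y ≤ (n:ℝ) * A y := by
    intro y
    have hbdd : BddBelow (Set.range fun σ : Fin n ≃ X =>
        ∑ k : Fin n, (((k:ℕ):ℝ)+1) * p (σ k) y) := by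
      refine ⟨0, ?_⟩
      rintro v ⟨σ, rfl⟩
      exact Finset.sum_nonneg fun k _ => mul_nonneg (by positivity) (hp0 _ y)
    obtain ⟨σ0⟩ := hne
    refine (ciInf_le hbdd σ0).trans ?_
    calc ∑ k : Fin n, (((k:ℕ):ℝ)+1) * p (σ0 k) y
        ≤ ∑ k : Fin n, (n:ℝ) * p (σ0 k) y := by
          apply Finset.sum_le_sum; intro k _
          exact mul_le_mul_of_nonneg_right (by exact_mod_cast k.isLt) (hp0 _ y)
      _ = (n:ℝ) * A y := by
          rw [← Finset.mul_sum, Equiv.sum_comp σ0 (fun x => p x y)]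
  have hGsum : Summable G :=
    Summable.of_nonneg_of_le hG0 hGle (hAsum.mul_left _)
  -- pointwise key inequality
  have hkey : ∀ y, ((n:ℝ)+1)/2 * A y - B y ≤ G y := by
    intro y
    have := pliam_key (fun x => p x y)
    rw [← hn] at this
    exact this
  have hLsum : Summable (fun y => ((n:ℝ)+1)/2 * A y - B y) :=
    (hAsum.mul_left _).sub hBsum
  have hts : ∑' y, (((n:ℝ)+1)/2 * A y - B y) ≤ ∑' y, G y :=
    hLsum.tsum_le_tsum hkey hGsum
  rw [(hAsum.mul_left _).tsum_sub hBsum, tsum_mul_left, hAtsum, mul_one, hBtsum] at hts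
  have hgoal : ((card X : ℝ) / 2) *
        ∑' xy : X × Y, |p xy.1 xy.2 - (∑ x' : X, p x' xy.2) / (card X : ℝ)|
      = ((n:ℝ)/2) * ∑' xy : X × Y, F xy := rfl
  rw [hgoal]
  linarith
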